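/- Let A, B be endomorphisms of a finite-dimensional complex vector space V of dimension n, and M = Ker(B) ∩ Ker(BA) ∩ ... ∩ Ker(BA^{n-1}). Then for every x ∈ M and every t ∈ ℝ, exp(t(A+B)) x = exp(tA) exp(tB) x. -/

import Mathlib

open NormedSpace

/-- For `x ∈ M = Ker B ∩ Ker (BA) ∩ ... ∩ Ker (BA^(n-1))` one has
`exp(t(A+B)) x = exp(tA) exp(tB) x` for all real `t`. -/
theorem stmt4 {V : Type*} [NormedAddCommGroup V] [NormedSpace ℂ V]
    [FiniteDimensional ℂ V] (n : ℕ) (hn : n = Module.finrank ℂ V)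
    (A B : V →L[ℂ] V) (x : V) (hx : ∀ k < n, B ((A ^ k) x) = 0) :
    ∀ t : ℝ, exp ((t : ℂ) • (A + B)) x
      = exp ((t : ℂ) • A) (exp ((t : ℂ) • B) x) := by
  haveI : CompleteSpace V := FiniteDimensional.complete ℂ V
  set Aₗ := (A : V →ₗ[ℂ] V) with hAₗ
  have hpowc : ∀ (k : ℕ) (y : V), (Aₗ ^ k) y = (A ^ k) y := by
    intro k y
    simp [Module.End.pow_apply, ContinuousLinearMap.coe_pow, hAₗ]
  -- Key: B (A^m x) = 0 for ALL m, via Cayley-Hamilton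
  have hAB : ∀ m : ℕ, B ((A ^ m) x) = 0 := by
    intro m
    have hmonic : Aₗ.charpoly.Monic := Aₗ.charpoly_monic
    have hdeg : Aₗ.charpoly.natDegree = n := by rw [Aₗ.charpoly_natDegree, hn]
    set r := (Polynomial.X ^ m) %ₘ Aₗ.charpoly with hr
    have hAm : (A ^ m) x = (Polynomial.aeval Aₗ r) x := by
      rw [← hpowc]
      have : (Aₗ ^ m) = Polynomial.aeval (R := ℂ) Aₗ (Polynomial.X ^ m) := by
        rw [map_pow, Polynomial.aeval_X]
      rw [this, ← Polynomial.modByMonic_add_div (Polynomial.X ^ m) Aₗ.charpoly]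
      simp [map_add, map_mul, LinearMap.aeval_self_charpoly, ← hr]
    have hcoeff : ∀ k, r.coeff k ≠ 0 → k < n := by
      intro k hk
      have h1 : (k : WithBot ℕ) ≤ r.degree := Polynomial.le_degree_of_ne_zero hk
      have h2 : r.degree < (n : WithBot ℕ) := by
        have h3 := Polynomial.degree_modByMonic_lt (Polynomial.X ^ m) hmonic
        rwa [Polynomial.degree_eq_natDegree hmonic.ne_zero, hdeg] at h3
      exact_mod_cast lt_of_le_of_lt h1 h2
    rw [hAm, Polynomial.aeval_eq_sum_range]
    simp only [LinearMap.coe_sum, Finset.sum_apply, LinearMap.smul_apply, map_sum, map_smul]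
    apply Finset.sum_eq_zero
    intro k _
    by_cases h : r.coeff k = 0
    · simp [h]
    · rw [hpowc, hx k (hcoeff k h), smul_zero]
  have hBx : B x = 0 := by simpa using hAB 0
  have hpow : ∀ m : ℕ, ((A + B) ^ m) x = (A ^ m) x := by
    intro m
    induction m with
    | zero => simp
    | succ m ih =>
      rw [pow_succ', pow_succ', ContinuousLinearMap.mul_apply, ih,
        ContinuousLinearMap.mul_apply, ContinuousLinearMap.add_apply, hAB m, add_zero]
  have hexp : ∀ T : V →L[ℂ] V,
      exp T x = ∑' m : ℕ, (m.factorial : ℂ)⁻¹ • (T ^ m) x := by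
    intro T
    rw [NormedSpace.exp_eq_tsum ℂ]
    have := (ContinuousLinearMap.apply ℂ V x).map_tsum
      (NormedSpace.expSeries_summable' (𝕂 := ℂ) T)
    simpa using this
  have hBm : ∀ m : ℕ, m ≠ 0 → (B ^ m) x = 0 := by
    intro m hm
    obtain ⟨k, rfl⟩ := Nat.exists_eq_succ_of_ne_zero hm
    rw [pow_succ, ContinuousLinearMap.mul_apply, hBx, map_zero]
  intro t
  have h2 : exp ((t : ℂ) • B) x = x := by
    rw [hexp, tsum_eq_single 0]
    · simp
    · intro m hm
      rw [smul_pow, ContinuousLinearMap.smul_apply, hBm m hm, smul_zero, smul_zero]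
  rw [h2, hexp, hexp]
  apply tsum_congr
  intro m
  rw [smul_pow, smul_pow, ContinuousLinearMap.smul_apply, ContinuousLinearMap.smul_apply, hpow m]
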